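/- The group U₁(H) acts transitively on the Hilbert ball: for all u, v ∈ B_H there exists T ∈ U₁(H) such that φ_T(u) = v. In particular, for u ∈ B_H, writing m = (1 − ‖u‖²)^{-1/2}, the operator T with block data A = I + (m − 1)·(z ↦ ⟨u,z⟩u/‖u‖²) (A = I if u = 0), x = m·u, y = m·u, a = m belongs to U₁(H) and satisfies φ_T(0) = u. -/

import Mathlib

/-- The extended Hilbert space `H̃ = H ⊕ ℂ` (Hilbert space direct sum). -/
noncomputable abbrev ExtH (H : Type*) [NormedAddCommGroup H] [InnerProductSpace ℂ H] :=
  WithLp 2 (H × ℂ)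

/-- The element `(z, a)` of `H̃`. -/
noncomputable def mk2 {H : Type*} [NormedAddCommGroup H] [InnerProductSpace ℂ H]
    (z : H) (a : ℂ) : ExtH H :=
  (WithLp.equiv 2 (H × ℂ)).symm (z, a)

/-- The generalized linear fractional (Möbius) transformation with block data `(A,x,y,a)`:
`φ(z) = (Az + x)/(⟨y,z⟩ + a)`. -/
noncomputable def moebius {H : Type*} [NormedAddCommGroup H] [InnerProductSpace ℂ H]
    (A : H →L[ℂ] H) (x y : H) (a : ℂ) (z : H) : H :=
  ((inner ℂ y z : ℂ) + a)⁻¹ • (A z + x)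

section
variable {H : Type*} [NormedAddCommGroup H] [InnerProductSpace ℂ H] [CompleteSpace H]

set_option linter.unusedSectionVars false
open ContinuousLinearMap

/-- block operator -/
noncomputable def blockCLM (A : H →L[ℂ] H) (x y : H) (a : ℂ) : ExtH H →L[ℂ] ExtH H :=
  (WithLp.prodContinuousLinearEquiv 2 ℂ H ℂ).symm.toContinuousLinearMap ∘L
    (((A ∘L fst ℂ H ℂ) + (snd ℂ H ℂ).smulRight x).prod
      ((innerSL ℂ y ∘L fst ℂ H ℂ) + a • (snd ℂ H ℂ))) ∘L
    (WithLp.prodContinuousLinearEquiv 2 ℂ H ℂ).toContinuousLinearMap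

lemma blockCLM_apply (A : H →L[ℂ] H) (x y : H) (a : ℂ) (z : H) (l : ℂ) :
    blockCLM A x y a (mk2 z l) = mk2 (A z + l • x) ((inner ℂ y z : ℂ) + l * a) := by
  simp [blockCLM, mk2, mul_comm]

lemma mk2_self (p : ExtH H) : p = mk2 p.fst p.snd := rfl

lemma mk2_inj {z w : H} {l c : ℂ} (h : mk2 z l = mk2 w c) : z = w ∧ l = c := by
  constructor
  · exact congrArg WithLp.fst h
  · exact congrArg WithLp.snd h

lemma inner_mk2 (z w : H) (l c : ℂ) :
    (inner ℂ (mk2 z l) (mk2 w c) : ℂ) = inner ℂ z w + (starRingEnd ℂ l) * c := by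
  rw [WithLp.prod_inner_apply]
  simp [mk2, RCLike.inner_apply, mul_comm]

end

section
variable {H : Type*} [NormedAddCommGroup H] [InnerProductSpace ℂ H] [CompleteSpace H]
set_option linter.unusedSectionVars false
open ContinuousLinearMap

lemma mk2_eq_iff {z w : H} {l c : ℂ} : mk2 z l = mk2 w c ↔ z = w ∧ l = c :=
  ⟨mk2_inj, by rintro ⟨rfl, rfl⟩; rfl⟩

lemma blockCLM_adjoint (A : H →L[ℂ] H) (x y : H) (a : ℂ) :
    adjoint (blockCLM A x y a) = blockCLM (adjoint A) y x (starRingEnd ℂ a) := by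
  symm
  rw [eq_adjoint_iff]
  intro p q
  rw [mk2_self p, mk2_self q]
  simp only [blockCLM_apply, inner_mk2, inner_add_left, inner_add_right, inner_smul_left,
    inner_smul_right, adjoint_inner_left, map_add, map_mul, RingHom.id_apply,
    starRingEnd_self_apply, inner_conj_symm]
  ring

lemma blockCLM_comp (A₁ A₂ : H →L[ℂ] H) (x₁ y₁ x₂ y₂ : H) (a₁ a₂ : ℂ) :
    blockCLM A₁ x₁ y₁ a₁ ∘L blockCLM A₂ x₂ y₂ a₂ =
      blockCLM (A₁ ∘L A₂ + (innerSL ℂ y₂).smulRight x₁) (A₁ x₂ + a₂ • x₁)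
        (adjoint A₂ y₁ + (starRingEnd ℂ a₁) • y₂) ((inner ℂ y₁ x₂ : ℂ) + a₁ * a₂) := by
  ext p
  rw [mk2_self p, comp_apply, blockCLM_apply, blockCLM_apply, blockCLM_apply, mk2_eq_iff]
  constructor
  · simp only [add_apply, comp_apply, smulRight_apply, innerSL_apply_apply, map_add, map_smul]
    simp only [smul_add, add_smul, smul_smul]
    module
  · simp only [inner_add_left, inner_add_right, inner_smul_left, inner_smul_right,
      adjoint_inner_left, starRingEnd_self_apply, inner_conj_symm]
    ring

end

section
variable {H : Type*} [NormedAddCommGroup H] [InnerProductSpace ℂ H] [CompleteSpace H]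
set_option linter.unusedSectionVars false
open ContinuousLinearMap

/-- The block-`A` operator for the transvection moving `0` to `u`. -/
noncomputable def opA (u : H) (m : ℝ) : H →L[ℂ] H :=
  ContinuousLinearMap.id ℂ H + (((m : ℂ) - 1) / (‖u‖ ^ 2 : ℂ)) • (innerSL ℂ u).smulRight u

lemma opA_apply (u : H) (m : ℝ) (z : H) :
    opA u m z = z + (((m : ℂ) - 1) / (‖u‖ ^ 2 : ℂ)) • ((inner ℂ u z : ℂ) • u) := by
  simp [opA]

lemma realSmul_eq (m : ℝ) (u : H) : (m : ℝ) • u = (m : ℂ) • u := by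
  rw [← algebraMap_smul ℂ m u]; norm_num

lemma opA_facts (u : H) (hu : ‖u‖ < 1) (m : ℝ) (hm : m = (Real.sqrt (1 - ‖u‖ ^ 2))⁻¹) :
    0 < m ∧ (m : ℂ) ^ 2 * (1 - (‖u‖ : ℂ) ^ 2) = 1 ∧
    adjoint (opA u m) = opA u m ∧
    (∀ z, opA u m (opA u m z) = z + ((m : ℂ) ^ 2 * (inner ℂ u z : ℂ)) • u) ∧
    opA u m u = (m : ℂ) • u ∧
    (∀ z, (inner ℂ u (opA u m z) : ℂ) = (m : ℂ) * (inner ℂ u z : ℂ)) := by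
  have h1 : (0:ℝ) < 1 - ‖u‖ ^ 2 := by nlinarith [norm_nonneg u]
  have hs : Real.sqrt (1 - ‖u‖ ^ 2) > 0 := Real.sqrt_pos.mpr h1
  have hmpos : 0 < m := by rw [hm]; positivity
  have hm2 : m ^ 2 * (1 - ‖u‖ ^ 2) = 1 := by
    rw [hm, inv_pow, inv_mul_eq_div, div_eq_one_iff_eq (by positivity)]
    exact (Real.sq_sqrt h1.le).symm
  have hm2c : (m : ℂ) ^ 2 * (1 - (‖u‖ : ℂ) ^ 2) = 1 := by exact_mod_cast hm2
  have hadj : adjoint (opA u m) = opA u m := by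
    symm; rw [eq_adjoint_iff]
    intro v w
    simp only [opA_apply, inner_add_left, inner_add_right, inner_smul_left, inner_smul_right,
      map_div₀, map_sub, map_one, map_pow, Complex.conj_ofReal, inner_conj_symm]
    ring
  have hiuu : (inner ℂ u u : ℂ) = (‖u‖ : ℂ) ^ 2 := by
    rw [inner_self_eq_norm_sq_to_K]; norm_num
  by_cases hu0 : u = 0
  · subst hu0
    refine ⟨hmpos, hm2c, hadj, ?_, ?_, ?_⟩ <;> simp [opA_apply]
  · have hn2 : ((‖u‖ : ℂ) ^ 2) ≠ 0 := by
      simpa using pow_ne_zero 2 (Complex.ofReal_ne_zero.mpr (norm_ne_zero_iff.mpr hu0))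
    refine ⟨hmpos, hm2c, hadj, ?_, ?_, ?_⟩
    · intro z
      simp only [opA_apply, inner_add_right, inner_smul_right, hiuu, smul_smul, smul_add]
      match_scalars
      · ring
      · field_simp [Complex.ofReal_ne_zero.mpr (norm_ne_zero_iff.mpr hu0)]
        linear_combination (inner ℂ u z : ℂ) * hm2c
    · rw [opA_apply, hiuu, smul_smul]
      match_scalars
      field_simp [Complex.ofReal_ne_zero.mpr (norm_ne_zero_iff.mpr hu0)]
      ring
    · intro z
      simp only [opA_apply, inner_add_right, inner_smul_right, hiuu]
      field_simp [Complex.ofReal_ne_zero.mpr (norm_ne_zero_iff.mpr hu0)]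
      ring
end

section
variable {H : Type*} [NormedAddCommGroup H] [InnerProductSpace ℂ H] [CompleteSpace H]
set_option linter.unusedSectionVars false
open ContinuousLinearMap

lemma unit_block (ε : ExtH H →L[ℂ] ExtH H) (hε : ∀ (z : H) (l : ℂ), ε (mk2 z l) = mk2 (-z) l)
    (A : H →L[ℂ] H) (x : H) (mc : ℂ)
    (hadj : adjoint A = A) (hconj : starRingEnd ℂ mc = mc)
    (hAA : ∀ z, A (A z) = z + (inner ℂ x z : ℂ) • x)
    (hAx : A x = mc • x)
    (hxA : ∀ z, (inner ℂ x (A z) : ℂ) = mc * (inner ℂ x z : ℂ))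
    (hxx : (inner ℂ x x : ℂ) = mc ^ 2 - 1) :
    adjoint (blockCLM A x x mc) ∘L ε ∘L blockCLM A x x mc = ε := by
  rw [blockCLM_adjoint, hadj, hconj]
  ext p
  rw [mk2_self p]
  simp only [comp_apply, blockCLM_apply, hε]
  rw [mk2_eq_iff]
  constructor
  · simp only [map_neg, map_add, map_smul, hAA, hAx]
    module
  · simp only [inner_neg_right, inner_add_right, inner_smul_right, hxA, hxx]
    ring

lemma unit_comp (ε T₁ T₂ : ExtH H →L[ℂ] ExtH H)
    (h₁ : adjoint T₁ ∘L ε ∘L T₁ = ε) (h₂ : adjoint T₂ ∘L ε ∘L T₂ = ε) :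
    adjoint (T₁ ∘L T₂) ∘L ε ∘L (T₁ ∘L T₂) = ε := by
  rw [adjoint_comp]
  have e1 := ContinuousLinearMap.ext_iff.mp h₁
  have e2 := ContinuousLinearMap.ext_iff.mp h₂
  simp only [comp_apply] at e1 e2 ⊢
  ext p
  simp only [comp_apply, e1, e2]
end

section
variable {H : Type*} [NormedAddCommGroup H] [InnerProductSpace ℂ H] [CompleteSpace H]
set_option linter.unusedSectionVars false
open ContinuousLinearMap

lemma block_unitary_aux (ε : ExtH H →L[ℂ] ExtH H)
    (hε : ∀ (z : H) (l : ℂ), ε (mk2 z l) = mk2 (-z) l)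
    (u : H) (hu : ‖u‖ < 1) (m : ℝ) (hm : m = (Real.sqrt (1 - ‖u‖ ^ 2))⁻¹) (x : H)
    (hx : x = (m : ℝ) • u ∨ x = -((m : ℝ) • u)) :
    adjoint (blockCLM (opA u m) x x (m : ℂ)) ∘L ε ∘L blockCLM (opA u m) x x (m : ℂ) = ε := by
  obtain ⟨hmpos, hm2, hadj, hAA, hAu, hxA⟩ := opA_facts u hu m hm
  have hiuu : (inner ℂ u u : ℂ) = (‖u‖ : ℂ) ^ 2 := by
    rw [inner_self_eq_norm_sq_to_K]; norm_num
  apply unit_block ε hε _ _ _ hadj (by simp [Complex.conj_ofReal])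
  · intro z
    rw [hAA z]
    rcases hx with rfl | rfl <;>
      · rw [realSmul_eq]
        simp only [inner_neg_left, inner_smul_left, Complex.conj_ofReal, smul_smul,
          neg_smul, smul_neg, neg_neg, neg_mul, mul_neg]
        try module
  · rcases hx with rfl | rfl <;>
      · rw [realSmul_eq]
        simp only [map_neg, map_smul, hAu, smul_smul, smul_neg]
        try module
  · intro z
    rcases hx with rfl | rfl <;>
      · rw [realSmul_eq]
        simp only [inner_neg_left, inner_smul_left, Complex.conj_ofReal, hxA, neg_mul, mul_neg,
          neg_neg, neg_inj]
        try ring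
  · rcases hx with rfl | rfl <;>
      · rw [realSmul_eq]
        simp only [inner_neg_left, inner_neg_right, inner_smul_left, inner_smul_right,
          Complex.conj_ofReal, hiuu, neg_neg, neg_mul, mul_neg]
        linear_combination -hm2
end

open ContinuousLinearMap in
/-- `U₁(H)` acts transitively on the Hilbert ball; moreover, for `u` in the
ball and `m = (1 − ‖u‖²)^{-1/2}`, the operator with block data
`(I + (m−1)·(z ↦ ⟨u,z⟩u/‖u‖²), m•u, m•u, m)` belongs to `U₁(H)` and sends `0` to `u`. -/
theorem moebius_action_transitive
    {H : Type*} [NormedAddCommGroup H] [InnerProductSpace ℂ H] [CompleteSpace H]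
    (ε : ExtH H →L[ℂ] ExtH H) (hε : ∀ (z : H) (l : ℂ), ε (mk2 z l) = mk2 (-z) l) :
    (∀ u v : H, ‖u‖ < 1 → ‖v‖ < 1 →
      ∃ (T : ExtH H →L[ℂ] ExtH H) (A : H →L[ℂ] H) (x y : H) (a : ℂ),
        (∀ (z : H) (l : ℂ),
          T (mk2 z l) = mk2 (A z + l • x) ((inner ℂ y z : ℂ) + l * a)) ∧
        adjoint T ∘L ε ∘L T = ε ∧
        moebius A x y a u = v) ∧
    (∀ u : H, ‖u‖ < 1 →
      ∀ m : ℝ, m = (Real.sqrt (1 - ‖u‖ ^ 2))⁻¹ →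
      ∃ (T : ExtH H →L[ℂ] ExtH H) (A : H →L[ℂ] H),
        (∀ z : H, A z = z + (((m : ℂ) - 1) / (‖u‖ ^ 2 : ℂ)) • ((inner ℂ u z : ℂ) • u)) ∧
        (∀ (z : H) (l : ℂ),
          T (mk2 z l) = mk2 (A z + l • (m • u)) ((inner ℂ (m • u) z : ℂ) + l * m)) ∧
        adjoint T ∘L ε ∘L T = ε ∧
        moebius A (m • u) (m • u) (m : ℂ) 0 = u) := by
  constructor
  · -- transitivity
    intro u v hu hv
    have h1u : (0:ℝ) < 1 - ‖u‖ ^ 2 := by nlinarith [norm_nonneg u]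
    have h1v : (0:ℝ) < 1 - ‖v‖ ^ 2 := by nlinarith [norm_nonneg v]
    set mu : ℝ := (Real.sqrt (1 - ‖u‖ ^ 2))⁻¹ with hmu
    set mv : ℝ := (Real.sqrt (1 - ‖v‖ ^ 2))⁻¹ with hmv
    have hmupos : 0 < mu := by rw [hmu]; positivity
    have hmvpos : 0 < mv := by rw [hmv]; positivity
    obtain ⟨-, hm2u, -, -, hAuu, -⟩ := opA_facts u hu mu hmu
    have hiuu : (inner ℂ u u : ℂ) = (‖u‖ : ℂ) ^ 2 := by
      rw [inner_self_eq_norm_sq_to_K]; norm_num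
    set Au := opA u mu
    set Av := opA v mv
    set xu : H := mu • u with hxu
    set xv : H := mv • v with hxv
    set S := blockCLM Au (-xu) (-xu) (mu : ℂ) with hS
    set Tv := blockCLM Av xv xv (mv : ℂ) with hTvdef
    have hSu := block_unitary_aux ε hε u hu mu hmu (-xu) (Or.inr rfl)
    have hTv := block_unitary_aux ε hε v hv mv hmv xv (Or.inl rfl)
    have hTu : adjoint (Tv ∘L S) ∘L ε ∘L (Tv ∘L S) = ε := unit_comp ε Tv S hTv hSu
    have hcomp : Tv ∘L S = blockCLM (Av ∘L Au + (innerSL ℂ (-xu)).smulRight xv)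
        (Av (-xu) + (mu : ℂ) • xv) (adjoint Au xv + (starRingEnd ℂ (mv : ℂ)) • (-xu))
        ((inner ℂ xv (-xu) : ℂ) + (mv : ℂ) * (mu : ℂ)) := blockCLM_comp _ _ _ _ _ _ _ _
    set c : ℂ := ((mu * (1 - ‖u‖ ^ 2) : ℝ) : ℂ) with hc
    have hcne : c ≠ 0 := Complex.ofReal_ne_zero.mpr (by positivity)
    have hSval : S (mk2 u 1) = mk2 0 c := by
      rw [hS, blockCLM_apply, mk2_eq_iff]
      constructor
      · rw [hAuu, hxu, realSmul_eq]
        simp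
      · rw [hxu, realSmul_eq]
        simp only [inner_neg_left, inner_smul_left, Complex.conj_ofReal, hiuu, one_mul, hc]
        push_cast
        ring
    have hval : (Tv ∘L S) (mk2 u 1) = mk2 (c • xv) (c * mv) := by
      rw [comp_apply, hSval, hTvdef, blockCLM_apply]
      simp
    rw [hcomp, blockCLM_apply] at hval
    obtain ⟨he1, he2⟩ := mk2_inj hval
    refine ⟨Tv ∘L S, _, _, _, _, fun z l => by rw [hcomp]; exact blockCLM_apply _ _ _ _ _ _,
      hTu, ?_⟩
    rw [moebius]
    rw [one_smul] at he1
    rw [one_mul] at he2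
    rw [he1, he2, hxv, realSmul_eq, smul_smul, smul_smul, mul_assoc, inv_mul_cancel₀, one_smul]
    exact mul_ne_zero hcne (by exact_mod_cast hmvpos.ne')
  · -- the explicit transvection
    intro u hu m hm
    have h1u : (0:ℝ) < 1 - ‖u‖ ^ 2 := by nlinarith [norm_nonneg u]
    have hmpos : 0 < m := by rw [hm]; positivity
    have hm0 : (m : ℂ) ≠ 0 := by exact_mod_cast hmpos.ne'
    refine ⟨blockCLM (opA u m) (m • u) (m • u) (m : ℂ), opA u m, opA_apply u m,
      fun z l => blockCLM_apply _ _ _ _ _ _,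
      block_unitary_aux ε hε u hu m hm _ (Or.inl rfl), ?_⟩
    rw [moebius]
    simp only [inner_zero_right, zero_add, map_zero, realSmul_eq, smul_smul,
      inv_mul_cancel₀ hm0, one_smul]
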